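/- For every l ∈ ℤ^V one has χ(l ∨ 0) ≤ χ(l), where l ∨ 0 denotes the coordinatewise positive part of l. -/
import Mathlib


/-- Cast an integer-valued lattice point into the rational vector space `V → ℚ`. -/
def toQ {V : Type*} (l : V → ℤ) : V → ℚ := fun v => (l v : ℚ)

section Aux

variable {V : Type*} [Fintype V] [DecidableEq V]

lemma repr_sum (x : V → ℚ) : x = ∑ v, x v • (Pi.single v 1 : V → ℚ) := by
  ext j
  simp [Pi.single_apply, Finset.sum_apply]

lemma expand_left (B : LinearMap.BilinForm ℚ (V → ℚ)) (x y : V → ℚ) :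
    B x y = ∑ v, x v * B (Pi.single v 1) y := by
  conv_lhs => rw [repr_sum x]
  simp [map_sum, LinearMap.sum_apply, LinearMap.smul_apply, smul_eq_mul]

end Aux

/-- For every `l ∈ ℤ^V` one has `χ(l ∨ 0) ≤ χ(l)`, where `l ∨ 0`
is the coordinatewise positive part of `l`. -/
theorem chi_positive_part_le
    {V : Type*} [Fintype V] [Nonempty V] [DecidableEq V]
    (B : LinearMap.BilinForm ℚ (V → ℚ))
    (hsymm : ∀ x y : V → ℚ, B x y = B y x)
    (hint : ∀ v w : V, ∃ n : ℤ, B (Pi.single v 1) (Pi.single w 1) = (n : ℚ))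
    (hoff : ∀ v w : V, v ≠ w → 0 ≤ B (Pi.single v 1) (Pi.single w 1))
    (hneg : ∀ x : V → ℚ, x ≠ 0 → B x x < 0)
    (ZK : V → ℚ)
    (hZK : ∀ v : V, B ZK (Pi.single v 1) = B (Pi.single v 1) (Pi.single v 1) + 2)
    (χ : (V → ℚ) → ℚ)
    (hχ : ∀ x : V → ℚ, χ x = -(B x (x - ZK)) / 2) :
    ∀ l : V → ℤ, χ (toQ (l ⊔ 0)) ≤ χ (toQ l) := by
  -- integrality of B l e_v
  choose nf hnf using hint
  have hBint : ∀ (l : V → ℤ) (v : V), ∃ n : ℤ, B (toQ l) (Pi.single v 1) = (n : ℚ) := by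
    intro l v
    refine ⟨∑ w, l w * nf w v, ?_⟩
    rw [expand_left]
    push_cast
    refine Finset.sum_congr rfl fun w _ => ?_
    rw [hnf w v]
    rfl
  -- the χ step formula
  have hstep : ∀ (x : V → ℚ) (v : V),
      χ (x + Pi.single v 1) = χ x + 1 - B x (Pi.single v 1) := by
    intro x v
    have key : B (x + Pi.single v 1) (x + Pi.single v 1 - ZK)
        = B x (x - ZK) + 2 * B x (Pi.single v 1) - 2 := by
      simp only [map_add, map_sub, LinearMap.add_apply, LinearMap.sub_apply]
      rw [hsymm (Pi.single v 1) x, hsymm (Pi.single v 1) ZK, hZK v]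
      ring
    rw [hχ, hχ, key]
    ring
  -- main induction on the total negative part
  have main : ∀ (n : ℕ) (l : V → ℤ), (∑ v, (-l v).toNat) ≤ n →
      χ (toQ (l ⊔ 0)) ≤ χ (toQ l) := by
    intro n
    induction n with
    | zero =>
      intro l hl
      have hpos : ∀ v, 0 ≤ l v := by
        intro v
        by_contra h
        push_neg at h
        have h1 : 1 ≤ (-l v).toNat := by omega
        have h2 : (-l v).toNat ≤ ∑ w, (-l w).toNat :=
          Finset.single_le_sum (f := fun w => (-l w).toNat)
            (fun w _ => Nat.zero_le _) (Finset.mem_univ v)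
        omega
      have : l ⊔ 0 = l := by
        funext v
        simp only [Pi.sup_apply, Pi.zero_apply]
        exact sup_eq_left.mpr (hpos v)
      rw [this]
    | succ n ih =>
      intro l hl
      by_cases hpos : ∀ v, 0 ≤ l v
      · have : l ⊔ 0 = l := by
          funext v
          simp only [Pi.sup_apply, Pi.zero_apply]
          exact sup_eq_left.mpr (hpos v)
        rw [this]
      · push_neg at hpos
        obtain ⟨v₀, hv₀⟩ := hpos
        -- the negative part m
        set m : V → ℤ := l ⊓ 0 with hm
        set p : V → ℤ := l ⊔ 0 with hp
        have hlpm : toQ l = toQ p + toQ m := by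
          funext w
          have hw : l w = p w + m w := by
            simp only [hp, hm, Pi.sup_apply, Pi.inf_apply, Pi.zero_apply]
            omega
          simp only [toQ, Pi.add_apply, hw]
          push_cast
          ring
        have hmne : toQ m ≠ 0 := by
          intro h
          have := congrFun h v₀
          simp only [toQ, hm, Pi.inf_apply, Pi.zero_apply, Pi.zero_apply] at this
          have h' : min (l v₀) 0 = 0 := by exact_mod_cast this
          rw [min_eq_left hv₀.le] at h'
          omega
        have hBmm : B (toQ m) (toQ m) < 0 := hneg _ hmne
        have hBpm : B (toQ p) (toQ m) ≤ 0 := by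
          rw [expand_left]
          refine Finset.sum_nonpos fun v _ => ?_
          rw [hsymm, expand_left]
          rw [Finset.mul_sum]
          refine Finset.sum_nonpos fun w _ => ?_
          by_cases hvw : v = w
          · subst hvw
            have hz : toQ p v * toQ m v = 0 := by
              simp only [toQ, hp, hm, Pi.sup_apply, Pi.inf_apply, Pi.zero_apply]
              rcases le_or_gt 0 (l v) with h | h
              · have : min (l v) 0 = 0 := by omega
                rw [this]; push_cast; ring
              · have : max (l v) 0 = 0 := by omega
                rw [this]; push_cast; ring
            calc toQ p v * (toQ m v * B (Pi.single v 1) (Pi.single v 1))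
                = (toQ p v * toQ m v) * B (Pi.single v 1) (Pi.single v 1) := by ring
              _ = 0 := by rw [hz, zero_mul]
              _ ≤ 0 := le_refl 0
          · have h1 : 0 ≤ toQ p v := by
              simp only [toQ, hp, Pi.sup_apply, Pi.zero_apply]
              exact_mod_cast le_max_right _ _
            have h2 : toQ m w ≤ 0 := by
              simp only [toQ, hm, Pi.inf_apply, Pi.zero_apply]
              exact_mod_cast min_le_right _ _
            have h3 : 0 ≤ B (Pi.single w 1) (Pi.single v 1) := hoff w v (Ne.symm hvw)
            exact mul_nonpos_of_nonneg_of_nonpos h1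
              (mul_nonpos_of_nonpos_of_nonneg h2 h3)
        have hBlm : B (toQ l) (toQ m) < 0 := by
          rw [hlpm, map_add, LinearMap.add_apply]
          linarith
        -- find v with m v < 0 and B l e_v > 0
        have hex : ∃ v, l v < 0 ∧ 0 < B (toQ l) (Pi.single v 1) := by
          by_contra hc
          push_neg at hc
          have : 0 ≤ B (toQ l) (toQ m) := by
            rw [hsymm, expand_left]
            refine Finset.sum_nonneg fun v _ => ?_
            rw [hsymm (Pi.single v 1) (toQ l)]
            rcases le_or_gt 0 (l v) with h | h
            · have : toQ m v = 0 := by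
                simp only [toQ, hm, Pi.inf_apply, Pi.zero_apply]
                have : min (l v) 0 = 0 := by omega
                rw [this]; rfl
              rw [this, zero_mul]
            · have h1 : toQ m v ≤ 0 := by
                simp only [toQ, hm, Pi.inf_apply, Pi.zero_apply]
                exact_mod_cast min_le_right _ _
              exact mul_nonneg_iff.mpr (Or.inr ⟨h1, hc v h⟩)
          linarith
        obtain ⟨v, hvneg, hvB⟩ := hex
        obtain ⟨k, hk⟩ := hBint l v
        have hk1 : (1 : ℚ) ≤ B (toQ l) (Pi.single v 1) := by
          rw [hk] at hvB ⊢
          exact_mod_cast by exact_mod_cast hvB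
        set l' : V → ℤ := l + Pi.single v 1 with hl'
        have htoQ : toQ l' = toQ l + Pi.single v 1 := by
          funext w
          simp only [toQ, hl', Pi.add_apply, Pi.single_apply]
          push_cast
          split <;> simp
        have hsup : l' ⊔ 0 = l ⊔ 0 := by
          funext w
          simp only [hl', Pi.sup_apply, Pi.add_apply, Pi.zero_apply, Pi.single_apply]
          by_cases hwv : w = v
          · subst hwv
            rw [if_pos rfl]
            omega
          · rw [if_neg hwv]
            omega
        have hmeas : (∑ w, (-l' w).toNat) ≤ n := by
          have hlt : (∑ w, (-l' w).toNat) < ∑ w, (-l w).toNat := by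
            refine Finset.sum_lt_sum (fun w _ => ?_) ⟨v, Finset.mem_univ v, ?_⟩
            · by_cases hwv : w = v
              · have e1 : l' w = l w + 1 := by simp [hl', Pi.single_apply, hwv]
                omega
              · have e1 : l' w = l w := by simp [hl', Pi.single_apply, hwv]
                omega
            · have e1 : l' v = l v + 1 := by simp [hl']
              omega
          omega
        have h1 : χ (toQ (l' ⊔ 0)) ≤ χ (toQ l') := ih l' hmeas
        have h2 : χ (toQ l') ≤ χ (toQ l) := by
          rw [htoQ, hstep]
          linarith
        rw [hsup] at h1
        linarith
  intro l
  exact main (∑ v, (-l v).toNat) l le_rfl
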